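/- For all integers t ≥ 1 and ℓ ≥ 0, every permutation of a set of t^ℓ elements can be written as the composition of at most ℓ parallel t-merges. -/

import Mathlib

/-- `σ` is a parallel `t`-merge: its domain can be partitioned into intervals `J_1, …, J_r`
of consecutive elements, each invariant under `σ`, such that each `J_j` can be further
partitioned into `t` intervals on each of which `σ` is increasing. -/
def IsParallelTMerge {N : ℕ} (σ : Equiv.Perm (Fin N)) (t : ℕ) : Prop :=
  ∃ (r : ℕ) (c : Fin (r + 1) → ℕ),
    Monotone c ∧ c 0 = 0 ∧ c (Fin.last r) = N ∧
    (∀ (j : Fin r) (x : Fin N), c j.castSucc ≤ (x : ℕ) → (x : ℕ) < c j.succ →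
        c j.castSucc ≤ (σ x : ℕ) ∧ (σ x : ℕ) < c j.succ) ∧
    (∀ j : Fin r, ∃ b : Fin (t + 1) → ℕ,
        Monotone b ∧ b 0 = c j.castSucc ∧ b (Fin.last t) = c j.succ ∧
        ∀ (i : Fin t) (x y : Fin N),
          b i.castSucc ≤ (x : ℕ) → (y : ℕ) < b i.succ → x < y → σ x < σ y)

def PMdata (N t : ℕ) (σ : Equiv.Perm (Fin N)) (r : ℕ) (c : ℕ → ℕ) : Prop :=
  Monotone c ∧ c 0 = 0 ∧ c r = N ∧
  (∀ j < r, ∀ x : Fin N, c j ≤ (x : ℕ) → (x : ℕ) < c (j + 1) →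
      c j ≤ (σ x : ℕ) ∧ (σ x : ℕ) < c (j + 1)) ∧
  (∀ j < r, ∃ b : ℕ → ℕ, Monotone b ∧ b 0 = c j ∧ b t = c (j + 1) ∧
      ∀ i < t, ∀ x y : Fin N, b i ≤ (x : ℕ) → (y : ℕ) < b (i + 1) → x < y → σ x < σ y)

theorem pmdata_to_iptm {N t : ℕ} {σ : Equiv.Perm (Fin N)} {r : ℕ} {c : ℕ → ℕ}
    (h : PMdata N t σ r c) : IsParallelTMerge σ t := by
  obtain ⟨hmono, h0, hr, hinv, hb⟩ := h
  refine ⟨r, fun j => c j, fun j j' hj => hmono hj, h0, by simpa using hr, ?_, ?_⟩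
  · intro j x hx hx'
    exact hinv j j.isLt x (by simpa using hx) (by simpa using hx')
  · intro j
    obtain ⟨b, hbm, hb0, hbt, hbs⟩ := hb j j.isLt
    refine ⟨fun i => b i, fun i i' hi => hbm hi, by simpa using hb0, by simpa using hbt, ?_⟩
    intro i x y hx hy hxy
    exact hbs i i.isLt x y (by simpa using hx) (by simpa using hy) hxy

theorem iptm_to_pmdata {N t : ℕ} {σ : Equiv.Perm (Fin N)} (h : IsParallelTMerge σ t) :
    ∃ r c, PMdata N t σ r c := by
  obtain ⟨r, c, hmono, h0, hr, hinv, hb⟩ := h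
  have hmin : ∀ k, min k r < r + 1 := fun k => by omega
  refine ⟨r, fun k => c ⟨min k r, hmin k⟩, ?_, ?_, ?_, ?_, ?_⟩
  · intro k k' hk
    exact hmono (by simp [Fin.le_def]; omega)
  · simpa using h0
  · show c ⟨min r r, hmin r⟩ = N
    have : (⟨min r r, hmin r⟩ : Fin (r+1)) = Fin.last r := by ext; simp
    rw [this, hr]
  · intro j hj x hx hx'
    have e1 : c ⟨min j r, hmin j⟩ = c ((⟨j, hj⟩ : Fin r).castSucc) :=
      congrArg c (by ext; simp; omega)
    have e2 : c ⟨min (j+1) r, hmin _⟩ = c ((⟨j, hj⟩ : Fin r).succ) :=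
      congrArg c (by ext; simp; omega)
    have H := hinv ⟨j, hj⟩ x (by rw [← e1]; exact hx) (by rw [← e2]; exact hx')
    exact ⟨by show c ⟨min j r, hmin j⟩ ≤ _; rw [e1]; exact H.1,
      by show _ < c ⟨min (j+1) r, hmin _⟩; rw [e2]; exact H.2⟩
  · intro j hj
    have e1 : c ⟨min j r, hmin j⟩ = c ((⟨j, hj⟩ : Fin r).castSucc) :=
      congrArg c (by ext; simp; omega)
    have e2 : c ⟨min (j+1) r, hmin _⟩ = c ((⟨j, hj⟩ : Fin r).succ) :=
      congrArg c (by ext; simp; omega)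
    obtain ⟨b, hbm, hb0, hbt, hbs⟩ := hb ⟨j, hj⟩
    have hmin' : ∀ k, min k t < t + 1 := fun k => by omega
    refine ⟨fun i => b ⟨min i t, hmin' i⟩, ?_, ?_, ?_, ?_⟩
    · intro i i' hi; exact hbm (by simp [Fin.le_def]; omega)
    · show b ⟨min 0 t, hmin' 0⟩ = c ⟨min j r, hmin j⟩
      rw [e1, ← hb0]; congr 1
    · show b ⟨min t t, hmin' t⟩ = c ⟨min (j+1) r, hmin _⟩
      rw [e2, ← hbt]; congr 1; ext; simp
    · intro i hi x y hx hy hxy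
      have f1 : b ⟨min i t, hmin' i⟩ = b ((⟨i, hi⟩ : Fin t).castSucc) :=
        congrArg b (by ext; simp; omega)
      have f2 : b ⟨min (i+1) t, hmin' _⟩ = b ((⟨i, hi⟩ : Fin t).succ) :=
        congrArg b (by ext; simp; omega)
      exact hbs ⟨i, hi⟩ x y (by rw [← f1]; exact hx) (by rw [← f2]; exact hy) hxy
theorem PMdata.pad {N t : ℕ} {σ : Equiv.Perm (Fin N)} {r : ℕ} {c : ℕ → ℕ}
    (h : PMdata N t σ r c) : PMdata N t σ (r + 1) (fun k => c (min k r)) := by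
  obtain ⟨hmono, h0, hr, hinv, hb⟩ := h
  refine ⟨fun k k' hk => hmono (by omega), by simpa using h0, by simp [hr], ?_, ?_⟩
  · intro j hj x hx hx'
    rcases Nat.lt_or_ge j r with hjr | hjr
    · have e1 : min j r = j := by omega
      have e2 : min (j+1) r = j + 1 := by omega
      simp only [e1, e2] at *
      exact hinv j hjr x hx hx'
    · exfalso
      have e1 : min j r = r := by omega
      simp only [e1, hr] at hx
      exact absurd x.isLt (by omega)
  · intro j hj
    rcases Nat.lt_or_ge j r with hjr | hjr
    · have e1 : min j r = j := by omega
      have e2 : min (j+1) r = j + 1 := by omega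
      obtain ⟨b, hbm, hb0, hbt, hbs⟩ := hb j hjr
      exact ⟨b, hbm, by simp only [e1]; exact hb0, by simp only [e2]; exact hbt, hbs⟩
    · refine ⟨fun _ => N, monotone_const, ?_, ?_, ?_⟩
      · have e1 : min j r = r := by omega
        simp only [e1, hr]
      · have e2 : min (j+1) r = r := by omega
        simp only [e2, hr]
      · intro i hi x y hx hy hxy
        have hx' : N ≤ (x : ℕ) := hx
        exact absurd x.isLt (by omega)

theorem PMdata.pad_to {N t : ℕ} {σ : Equiv.Perm (Fin N)} {r : ℕ} {c : ℕ → ℕ}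
    (h : PMdata N t σ r c) {R : ℕ} (hR : r ≤ R) : ∃ c', PMdata N t σ R c' := by
  induction R, hR using Nat.le_induction with
  | base => exact ⟨c, h⟩
  | succ R hR ih => obtain ⟨c', hc'⟩ := ih; exact ⟨_, hc'.pad⟩

theorem PMdata.one {N t : ℕ} (ht : 1 ≤ t) :
    PMdata N t 1 1 (fun k => if k = 0 then 0 else N) := by
  refine ⟨?_, by simp, by simp, ?_, ?_⟩
  · intro k k' hk
    by_cases h : k = 0 <;> by_cases h' : k' = 0 <;> simp [h, h'] <;> omega
  · intro j hj x hx hx'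
    interval_cases j
    simp only [if_pos rfl]
    simpa using x.isLt
  · intro j hj
    interval_cases j
    refine ⟨fun i => if i = 0 then 0 else N, ?_, by simp, by have h1 : t ≠ 0 := (by omega); beta_reduce; simp [h1], ?_⟩
    · intro k k' hk; by_cases h : k = 0 <;> by_cases h' : k' = 0 <;> simp [h, h'] <;> omega
    · intro i hi x y hx hy hxy
      by_cases h : i = 0
      · simpa using hxy
      · simp [h] at hx
        exact absurd x.isLt (by omega)

def blockPerm {M t : ℕ} (f : Fin t → Equiv.Perm (Fin M)) : Equiv.Perm (Fin (t * M)) :=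
  finProdFinEquiv.permCongr (Equiv.prodCongrRight f)

theorem block_lt {M t : ℕ} (u : Fin M) (y : Fin t) : (u : ℕ) + M * (y : ℕ) < t * M := by
  calc (u : ℕ) + M * y < M + M * y := by omega
  _ = M * (y + 1) := by ring
  _ ≤ M * t := Nat.mul_le_mul_left M y.isLt
  _ = t * M := Nat.mul_comm M t

theorem blockPerm_apply {M t : ℕ} (f : Fin t → Equiv.Perm (Fin M)) (u : Fin M) (y : Fin t) :
    blockPerm f ⟨(u : ℕ) + M * y, block_lt u y⟩ = ⟨f y u + M * y, block_lt (f y u) y⟩ := by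
  have e2 : finProdFinEquiv.symm ⟨(u : ℕ) + M * y, block_lt u y⟩ = (y, u) := by
    rw [Equiv.symm_apply_eq]; rfl
  simp [blockPerm, Equiv.permCongr_apply, e2, Equiv.prodCongrRight_apply]
  rfl

theorem blockPerm_one {M t : ℕ} : blockPerm (fun _ : Fin t => (1 : Equiv.Perm (Fin M))) = 1 := by
  ext x
  simp [blockPerm, Equiv.permCongr_apply, Equiv.prodCongrRight_apply]
  exact Nat.mod_add_div _ _

theorem blockPerm_mul {M t : ℕ} (f g : Fin t → Equiv.Perm (Fin M)) :
    blockPerm f * blockPerm g = blockPerm (fun y => f y * g y) := by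
  ext x
  simp [blockPerm, Equiv.permCongr_apply, Equiv.prodCongrRight_apply, Equiv.Perm.mul_apply]

theorem blockPerm_ofFn_prod {M t : ℕ} (K : ℕ) (F : Fin t → Fin K → Equiv.Perm (Fin M)) :
    (List.ofFn (fun m => blockPerm (fun y => F y m))).prod
      = blockPerm (fun y => (List.ofFn (F y)).prod) := by
  induction K with
  | zero => simp [blockPerm_one]
  | succ K ih =>
    rw [List.ofFn_succ, List.prod_cons, ih (fun y m => F y m.succ), blockPerm_mul]
    congr 1
    funext y
    rw [List.ofFn_succ, List.prod_cons]


theorem blockPerm_val {M t : ℕ} (f : Fin t → Equiv.Perm (Fin M)) (x : Fin (t * M))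
    (u : Fin M) (y : Fin t) (hx : (x : ℕ) = (u : ℕ) + M * (y : ℕ)) :
    ((blockPerm f) x : ℕ) = (f y u : ℕ) + M * (y : ℕ) := by
  have hxe : x = ⟨(u : ℕ) + M * (y : ℕ), block_lt u y⟩ := Fin.ext hx
  rw [hxe, blockPerm_apply]

theorem PMdata.block {M t R : ℕ} (ht : 1 ≤ t) (hR : 1 ≤ R)
    (f : Fin t → Equiv.Perm (Fin M)) (c : Fin t → ℕ → ℕ)
    (h : ∀ y, PMdata M t (f y) R (c y)) :
    ∃ C, PMdata (t * M) t (blockPerm f) (t * R) C := by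
  have hcm : ∀ y : Fin t, Monotone (c y) := fun y => (h y).1
  have hc0 : ∀ y : Fin t, c y 0 = 0 := fun y => (h y).2.1
  have hcR : ∀ y : Fin t, c y R = M := fun y => (h y).2.2.1
  have hinv := fun y : Fin t => (h y).2.2.2.1
  have hbb := fun y : Fin t => (h y).2.2.2.2
  have hdiv : ∀ k, k < t * R → k / R < t := fun k hk =>
    Nat.div_lt_of_lt_mul (by rwa [Nat.mul_comm] at hk)
  set C : ℕ → ℕ := fun k =>
    if hk : k < t * R then M * (k / R) + c ⟨k / R, hdiv k hk⟩ (k % R) else t * M with hCdef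
  have hCpos : ∀ k (hk : k < t * R),
      C k = M * (k / R) + c ⟨k / R, hdiv k hk⟩ (k % R) := fun k hk => dif_pos hk
  have hCneg : ∀ k, ¬(k < t * R) → C k = t * M := fun k hk => dif_neg hk
  have hmod : ∀ k, k < t * R → k % R < R := fun k _ => Nat.mod_lt _ (by omega)
  have hCsucc : ∀ k (hk : k < t * R),
      C (k + 1) = M * (k / R) + c ⟨k / R, hdiv k hk⟩ (k % R + 1) := by
    intro k hk
    have hdm := Nat.div_add_mod k R
    have hyt : k / R < t := hdiv k hk
    have hpR : k % R < R := hmod k hk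
    rcases Nat.lt_or_ge (k % R + 1) R with hp1 | hp1
    · -- same block
      have hkk : k + 1 = (k % R + 1) + R * (k / R) := by omega
      have h1 : (k + 1) / R = k / R := by
        rw [hkk, Nat.add_mul_div_left _ _ (show 0 < R by omega), Nat.div_eq_of_lt hp1]
        omega
      have h2 : (k + 1) % R = k % R + 1 := by
        rw [hkk, Nat.add_mul_mod_self_left, Nat.mod_eq_of_lt hp1]
      have hk1 : k + 1 < t * R := by
        calc k + 1 = R * (k / R) + (k % R + 1) := by omega
        _ < R * (k / R) + R := by omega
        _ = R * (k / R + 1) := by ring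
        _ ≤ R * t := Nat.mul_le_mul_left R hyt
        _ = t * R := Nat.mul_comm R t
      rw [hCpos (k+1) hk1]
      have hA : (⟨(k+1)/R, hdiv _ hk1⟩ : Fin t) = ⟨k/R, hdiv k hk⟩ := Fin.ext h1
      rw [hA, h2, h1]
    · -- block boundary
      have hp1' : k % R + 1 = R := by omega
      have hkk : k + 1 = R * (k / R + 1) := by rw [Nat.mul_add, Nat.mul_one]; omega
      have hcRy : c ⟨k / R, hdiv k hk⟩ (k % R + 1) = M := by rw [hp1']; exact hcR _
      rw [hcRy]
      rcases Nat.lt_or_ge (k / R + 1) t with hyt1 | hyt1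
      · have hk1 : k + 1 < t * R := by
          calc k + 1 = R * (k / R + 1) := hkk
          _ < R * t := mul_lt_mul_of_pos_left hyt1 (show 0 < R by omega)
          _ = t * R := Nat.mul_comm R t
        have h1 : (k + 1) / R = k / R + 1 := by
          rw [hkk, Nat.mul_div_cancel_left _ (show 0 < R by omega)]
        have h2 : (k + 1) % R = 0 := by
          rw [hkk, Nat.mul_mod_right]
        rw [hCpos (k+1) hk1]
        have hA : (⟨(k+1)/R, hdiv _ hk1⟩ : Fin t) = ⟨k/R + 1, hyt1⟩ := Fin.ext h1
        rw [hA, h2, h1, hc0]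
        ring
      · have hy1 : k / R + 1 = t := by omega
        have hk1 : ¬(k + 1 < t * R) := by
          rw [hkk, hy1, Nat.mul_comm]; omega
        rw [hCneg _ hk1, Nat.mul_comm t M]
        have : M * (k / R) + M = M * (k / R + 1) := by ring
        rw [this, hy1]
  have hblock : ∀ k (hk : k < t * R),
      M * (k / R) ≤ C k ∧ C (k + 1) ≤ M * (k / R) + M := by
    intro k hk
    constructor
    · rw [hCpos k hk]; omega
    · rw [hCsucc k hk]
      have : c ⟨k/R, hdiv k hk⟩ (k % R + 1) ≤ c ⟨k/R, hdiv k hk⟩ R :=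
        hcm _ (by have := hmod k hk; omega)
      rw [hcR] at this
      omega
  refine ⟨C, monotone_nat_of_le_succ ?_, ?_, ?_, ?_, ?_⟩
  · intro k
    rcases Nat.lt_or_ge k (t * R) with hk | hk
    · rw [hCpos k hk, hCsucc k hk]
      have := hcm ⟨k/R, hdiv k hk⟩ (show k % R ≤ k % R + 1 by omega)
      omega
    · rw [hCneg k (by omega), hCneg (k+1) (by omega)]
  · rw [hCpos 0 (by positivity)]
    simp [hc0]
  · exact hCneg _ (lt_irrefl _)
  · -- invariance
    intro k hk x hx hx'
    obtain ⟨hb1, hb2⟩ := hblock k hk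
    have hxl : M * (k / R) ≤ (x : ℕ) := le_trans hb1 hx
    have hxu : (x : ℕ) < M * (k / R) + M := lt_of_lt_of_le hx' hb2
    have huM : (x : ℕ) - M * (k / R) < M := by omega
    have happ : ((blockPerm f) x : ℕ)
        = (f ⟨k / R, hdiv k hk⟩ ⟨(x : ℕ) - M * (k / R), huM⟩ : ℕ) + M * (k / R) :=
      blockPerm_val f x ⟨(x : ℕ) - M * (k / R), huM⟩ ⟨k / R, hdiv k hk⟩ (by
        show (x : ℕ) = (x : ℕ) - M * (k / R) + M * (k / R); omega)
    rw [hCpos k hk] at hx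
    rw [hCsucc k hk] at hx'
    have hiu : c ⟨k / R, hdiv k hk⟩ (k % R) ≤ ((⟨(x : ℕ) - M * (k / R), huM⟩ : Fin M) : ℕ) := by
      show c ⟨k / R, hdiv k hk⟩ (k % R) ≤ (x : ℕ) - M * (k / R); omega
    have hiu' : ((⟨(x : ℕ) - M * (k / R), huM⟩ : Fin M) : ℕ) < c ⟨k / R, hdiv k hk⟩ (k % R + 1) := by
      show (x : ℕ) - M * (k / R) < c ⟨k / R, hdiv k hk⟩ (k % R + 1); omega
    obtain ⟨H1, H2⟩ := hinv ⟨k / R, hdiv k hk⟩ (k % R) (hmod k hk)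
      ⟨(x : ℕ) - M * (k / R), huM⟩ hiu hiu'
    constructor
    · rw [hCpos k hk, happ]; omega
    · rw [hCsucc k hk, happ]; omega
  · -- merge structure
    intro k hk
    obtain ⟨b, hbm, hb0, hbt, hbs⟩ := hbb ⟨k / R, hdiv k hk⟩ (k % R) (hmod k hk)
    refine ⟨fun i => M * (k / R) + b i, fun i i' hi => by have := hbm hi; show M * (k / R) + b i ≤ M * (k / R) + b i'; omega, ?_, ?_, ?_⟩
    · show M * (k / R) + b 0 = C k
      rw [hb0, hCpos k hk]
    · show M * (k / R) + b t = C (k + 1)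
      rw [hbt, hCsucc k hk]
    · intro i hi x x' hx hx' hxx
      have hx2 : M * (k / R) + b i ≤ (x : ℕ) := hx
      have hx2' : (x' : ℕ) < M * (k / R) + b (i + 1) := hx'
      have hbl : c ⟨k / R, hdiv k hk⟩ (k % R) ≤ b i := hb0 ▸ hbm (Nat.zero_le i)
      have hbu : b (i + 1) ≤ c ⟨k / R, hdiv k hk⟩ (k % R + 1) :=
        hbt ▸ hbm (show i + 1 ≤ t by omega)
      have hcu : c ⟨k / R, hdiv k hk⟩ (k % R + 1) ≤ M := by
        have := hcm ⟨k / R, hdiv k hk⟩ (show k % R + 1 ≤ R by have := hmod k hk; omega)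
        rw [hcR] at this; exact this
      have hxx' : (x : ℕ) < (x' : ℕ) := hxx
      have huM : (x : ℕ) - M * (k / R) < M := by omega
      have hvM : (x' : ℕ) - M * (k / R) < M := by omega
      have happ : ((blockPerm f) x : ℕ)
          = (f ⟨k / R, hdiv k hk⟩ ⟨(x : ℕ) - M * (k / R), huM⟩ : ℕ) + M * (k / R) :=
        blockPerm_val f x ⟨(x : ℕ) - M * (k / R), huM⟩ ⟨k / R, hdiv k hk⟩ (by
          show (x : ℕ) = (x : ℕ) - M * (k / R) + M * (k / R); omega)
      have happ' : ((blockPerm f) x' : ℕ)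
          = (f ⟨k / R, hdiv k hk⟩ ⟨(x' : ℕ) - M * (k / R), hvM⟩ : ℕ) + M * (k / R) :=
        blockPerm_val f x' ⟨(x' : ℕ) - M * (k / R), hvM⟩ ⟨k / R, hdiv k hk⟩ (by
          show (x' : ℕ) = (x' : ℕ) - M * (k / R) + M * (k / R); omega)
      have hfu : b i ≤ ((⟨(x : ℕ) - M * (k / R), huM⟩ : Fin M) : ℕ) := by
        show b i ≤ (x : ℕ) - M * (k / R); omega
      have hfv : ((⟨(x' : ℕ) - M * (k / R), hvM⟩ : Fin M) : ℕ) < b (i + 1) := by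
        show (x' : ℕ) - M * (k / R) < b (i + 1); omega
      have huv : (⟨(x : ℕ) - M * (k / R), huM⟩ : Fin M) < ⟨(x' : ℕ) - M * (k / R), hvM⟩ := by
        rw [Fin.lt_def]
        show (x : ℕ) - M * (k / R) < (x' : ℕ) - M * (k / R); omega
      have H : (f ⟨k / R, hdiv k hk⟩ ⟨(x : ℕ) - M * (k / R), huM⟩ : ℕ)
          < (f ⟨k / R, hdiv k hk⟩ ⟨(x' : ℕ) - M * (k / R), hvM⟩ : ℕ) :=
        hbs i hi _ _ hfu hfv huv
      rw [Fin.lt_def, happ, happ']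
      omega

theorem PMdata.merge {M t : ℕ} (ht : 1 ≤ t) (μ : Equiv.Perm (Fin (t * M)))
    (hmono : ∀ (y : Fin t) (x x' : Fin (t * M)),
      M * (y : ℕ) ≤ (x : ℕ) → (x' : ℕ) < M * ((y : ℕ) + 1) → x < x' → μ x < μ x') :
    PMdata (t * M) t μ 1 (fun k => if k = 0 then 0 else t * M) := by
  refine ⟨?_, by simp, by simp, ?_, ?_⟩
  · intro k k' hk
    by_cases h : k = 0 <;> by_cases h' : k' = 0 <;> simp [h, h'] <;> omega
  · intro j hj x hx hx'
    interval_cases j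
    constructor
    · show (if (0:ℕ) = 0 then 0 else t * M) ≤ _
      simp
    · show ((μ x : ℕ)) < (if (0:ℕ) + 1 = 0 then 0 else t * M)
      simpa using (μ x).isLt
  · intro j hj
    interval_cases j
    refine ⟨fun i => min i t * M, ?_, ?_, ?_, ?_⟩
    · intro i i' h; exact Nat.mul_le_mul_right M (by omega)
    · show min 0 t * M = if (0:ℕ) = 0 then 0 else t * M
      simp
    · show min t t * M = if (0:ℕ) + 1 = 0 then 0 else t * M
      simp [Nat.mul_comm]
    · intro i hi x x' hx hx' hxx
      have hx2 : min i t * M ≤ (x : ℕ) := hx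
      have hx2' : (x' : ℕ) < min (i+1) t * M := hx'
      have e1 : min i t * M = M * i := by rw [Nat.min_eq_left (by omega), Nat.mul_comm]
      have e2 : min (i+1) t * M = M * (i+1) := by rw [Nat.min_eq_left (by omega), Nat.mul_comm]
      refine hmono ⟨i, hi⟩ x x' ?_ ?_ hxx
      · show M * i ≤ (x : ℕ); omega
      · show (x' : ℕ) < M * (i + 1); omega

theorem ofFn_get_cast {α : Type*} (l : List α) (K : ℕ) (h : l.length = K) :
    List.ofFn (fun m : Fin K => l.get (Fin.cast h.symm m)) = l := by
  subst h
  simpa using List.ofFn_get l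

theorem merge_sort_aux (t : ℕ) (ht : 1 ≤ t) :
    ∀ ℓ N, N = t ^ ℓ → ∀ σ : Equiv.Perm (Fin N),
    ∃ L : List (Equiv.Perm (Fin N)),
      L.length = ℓ ∧ (∀ τ ∈ L, IsParallelTMerge τ t) ∧ σ = L.prod := by
  intro ℓ
  induction ℓ with
  | zero =>
    intro N hN σ
    have hN1 : N = 1 := by simpa using hN
    subst hN1
    haveI : Subsingleton (Fin 1) := inferInstance
    exact ⟨[], by simp, by simp, Equiv.ext fun x => Subsingleton.elim _ _⟩
  | succ ℓ ih =>
    intro N hN σ'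
    obtain ⟨M, hMdef⟩ : ∃ M, M = t ^ ℓ := ⟨t ^ ℓ, rfl⟩
    rw [← hMdef] at ih
    obtain rfl : N = t * M := by rw [hN, hMdef, pow_succ']
    set σ := σ' with hσdef
    -- block embeddings
    set e : ∀ _ : Fin t, Fin M → Fin (t * M) := fun y u => ⟨(u : ℕ) + M * (y : ℕ), block_lt u y⟩
      with hedef
    have he_inj : ∀ y, Function.Injective (e y) := by
      intro y u v huv
      have : (u : ℕ) + M * (y : ℕ) = (v : ℕ) + M * (y : ℕ) := congrArg Fin.val huv
      exact Fin.ext (by omega)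
    set g : Fin t → Equiv.Perm (Fin M) := fun y => Tuple.sort (fun u => σ (e y u)) with hgdef
    set f : Fin t → Equiv.Perm (Fin M) := fun y => (g y)⁻¹ with hfdef
    set π : Equiv.Perm (Fin (t * M)) := blockPerm f with hπdef
    set μ : Equiv.Perm (Fin (t * M)) := σ * π⁻¹ with hμdef
    -- strict monotonicity of μ on each block
    have hμb : ∀ (y : Fin t) (u : Fin M), μ (e y u) = σ (e y (g y u)) := by
      intro y u
      have hfu : f y ((g y) u) = u := (g y).symm_apply_apply u
      have h1 : π (e y (g y u)) = e y u := by
        show blockPerm f ⟨((g y) u : ℕ) + M * (y : ℕ), block_lt _ _⟩ = e y u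
        rw [blockPerm_apply f ((g y) u) y, hfu]
      have h2 : π⁻¹ (e y u) = e y (g y u) := by
        rw [← h1]; exact π.symm_apply_apply _
      show σ (π⁻¹ (e y u)) = σ (e y ((g y) u))
      rw [h2]
    have hμmono : ∀ (y : Fin t), StrictMono (fun u => μ (e y u)) := by
      intro y
      have heq : (fun u => μ (e y u)) = (fun u => σ (e y u)) ∘ Tuple.sort (fun u => σ (e y u)) := by
        funext u
        exact hμb y u
      rw [heq]
      apply (Tuple.monotone_sort _).strictMono_of_injective
      exact (σ.injective.comp (he_inj y)).comp (Tuple.sort _).injective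
    -- μ is a parallel merge
    have hμmerge : IsParallelTMerge μ t := by
      apply pmdata_to_iptm (PMdata.merge ht μ ?_)
      intro y x x' hx hx' hxx
      have hxx' : (x : ℕ) < (x' : ℕ) := hxx
      have hMy : M * ((y : ℕ) + 1) = M * (y : ℕ) + M := by ring
      have hxu : (x : ℕ) < M * ((y : ℕ) + 1) := by omega
      have huM : (x : ℕ) - M * (y : ℕ) < M := by omega
      have hvM : (x' : ℕ) - M * (y : ℕ) < M := by omega
      have hxe : x = e y ⟨(x : ℕ) - M * (y : ℕ), huM⟩ := Fin.ext (by
        show (x : ℕ) = (x : ℕ) - M * (y : ℕ) + M * (y : ℕ); omega)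
      have hxe' : x' = e y ⟨(x' : ℕ) - M * (y : ℕ), hvM⟩ := Fin.ext (by
        show (x' : ℕ) = (x' : ℕ) - M * (y : ℕ) + M * (y : ℕ); omega)
      rw [hxe, hxe']
      exact hμmono y (by rw [Fin.lt_def]; show (x:ℕ) - M * (y:ℕ) < (x':ℕ) - M * (y:ℕ); omega)
    -- decompose each f y by induction
    have hIH : ∀ y : Fin t, ∃ L : List (Equiv.Perm (Fin M)),
        L.length = ℓ ∧ (∀ τ ∈ L, IsParallelTMerge τ t) ∧ f y = L.prod := fun y => ih M rfl (f y)
    choose Ls hlen hmerge hprod using hIH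
    set F : Fin t → Fin ℓ → Equiv.Perm (Fin M) :=
      fun y m => (Ls y).get (Fin.cast (hlen y).symm m) with hFdef
    have hofn : ∀ y, List.ofFn (F y) = Ls y := fun y => ofFn_get_cast _ _ (hlen y)
    set τ : Fin ℓ → Equiv.Perm (Fin (t * M)) := fun m => blockPerm (fun y => F y m) with hτdef
    have hπprod : π = (List.ofFn τ).prod := by
      rw [hτdef, blockPerm_ofFn_prod ℓ F, hπdef]
      congr 1
      funext y
      rw [hofn y, ← hprod y]
    refine ⟨μ :: List.ofFn τ, by simp, ?_, ?_⟩
    · intro ρ hρ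
      rcases List.mem_cons.mp hρ with hρ | hρ
      · rw [hρ]; exact hμmerge
      · obtain ⟨m, rfl⟩ := List.mem_ofFn.mp hρ
        -- τ m is a parallel merge via the block lemma
        have hy : ∀ y : Fin t, ∃ r c, PMdata M t (F y m) r c := by
          intro y
          exact iptm_to_pmdata (hmerge y _ (List.get_mem (Ls y) (Fin.cast (hlen y).symm m)))
        choose r c hrc using hy
        set R : ℕ := (Finset.univ.sup r) + 1 with hRdef
        have hpad : ∀ y : Fin t, ∃ c', PMdata M t (F y m) R c' := by
          intro y
          exact (hrc y).pad_to (by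
            have := Finset.le_sup (f := r) (Finset.mem_univ y)
            omega)
        choose c' hc' using hpad
        obtain ⟨C, hC⟩ := PMdata.block ht (by omega) (fun y => F y m) c' hc'
        exact pmdata_to_iptm hC
    · rw [List.prod_cons, ← hπprod, hμdef, inv_mul_cancel_right]

/-- every permutation of `t^ℓ` elements is a composition of at most `ℓ`
parallel `t`-merges. -/
theorem merge_sort_decomposition (t ℓ : ℕ) (ht : 1 ≤ t) (σ : Equiv.Perm (Fin (t ^ ℓ))) :
    ∃ L : List (Equiv.Perm (Fin (t ^ ℓ))),
      L.length ≤ ℓ ∧ (∀ τ ∈ L, IsParallelTMerge τ t) ∧ σ = L.prod := by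
  obtain ⟨L, h1, h2, h3⟩ := merge_sort_aux t ht ℓ (t ^ ℓ) rfl σ
  exact ⟨L, le_of_eq h1, h2, h3⟩
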